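/- Let M be a nonzero conical refinement monoid that is prime (M \ {0} downward directed under ≤⁺) and in which every element has finite index. Then every nonzero element of M is ≥⁺ some atom of M, and M has a unique atom. -/

import Mathlib

/-- The algebraic preorder on a commutative monoid: `x ≤⁺ y` iff `∃ z, x + z = y`. -/
def AlgLE {M : Type*} [AddCommMonoid M] (x y : M) : Prop := ∃ z : M, x + z = y

/-- A commutative monoid is conical if `x + y = 0` forces `x = y = 0`. -/
def Conical (M : Type*) [AddCommMonoid M] : Prop :=
  ∀ x y : M, x + y = 0 → x = 0 ∧ y = 0

/-- The 2×2 refinement property. -/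
def IsRefinementMonoid (M : Type*) [AddCommMonoid M] : Prop :=
  ∀ a₀ a₁ b₀ b₁ : M, a₀ + a₁ = b₀ + b₁ →
    ∃ c₀₀ c₀₁ c₁₀ c₁₁ : M,
      a₀ = c₀₀ + c₀₁ ∧ a₁ = c₁₀ + c₁₁ ∧ b₀ = c₀₀ + c₁₀ ∧ b₁ = c₀₁ + c₁₁

/-- Orthogonality: there is no nonzero common lower bound for `≤⁺`. -/
def Orth {M : Type*} [AddCommMonoid M] (x y : M) : Prop :=
  ¬ ∃ z : M, z ≠ 0 ∧ AlgLE z x ∧ AlgLE z y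

/-- `e` has finite index: some `n` with `(n+1)x ≤⁺ e → x = 0`. -/
def HasFiniteIndex {M : Type*} [AddCommMonoid M] (e : M) : Prop :=
  ∃ n : ℕ, ∀ x : M, AlgLE ((n + 1) • x) e → x = 0

/-- `M` is prime: the nonzero elements are downward directed under `≤⁺`. -/
def PrimeMonoid (M : Type*) [AddCommMonoid M] : Prop :=
  ∀ x y : M, x ≠ 0 → y ≠ 0 → ∃ z : M, z ≠ 0 ∧ AlgLE z x ∧ AlgLE z y

/-- An atom: a nonzero `p` such that every nonzero `x ≤⁺ p` satisfies `p ≤⁺ x`. -/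
def MonAtom {M : Type*} [AddCommMonoid M] (p : M) : Prop :=
  p ≠ 0 ∧ ∀ x : M, x ≠ 0 → AlgLE x p → AlgLE p x

theorem alg_trans {M : Type*} [AddCommMonoid M] {x y z : M}
    (h1 : AlgLE x y) (h2 : AlgLE y z) : AlgLE x z := by
  obtain ⟨c, hc⟩ := h1; obtain ⟨d, hd⟩ := h2
  exact ⟨c + d, by rw [← add_assoc, hc, hd]⟩

theorem alg_smul {M : Type*} [AddCommMonoid M] {x y : M} (m : ℕ)
    (h : AlgLE x y) : AlgLE (m • x) (m • y) := by
  obtain ⟨c, hc⟩ := h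
  exact ⟨m • c, by rw [← smul_add, hc]⟩

theorem stmt5 {M : Type*} [AddCommMonoid M]
    (hnz : ∃ x : M, x ≠ 0)
    (hCon : Conical M) (hRef : IsRefinementMonoid M)
    (hPrime : PrimeMonoid M)
    (hIdx : ∀ e : M, HasFiniteIndex e) :
    (∀ a : M, a ≠ 0 → ∃ p : M, MonAtom p ∧ AlgLE p a) ∧
    (∃! p : M, MonAtom p) := by
  have antis : ∀ x y : M, AlgLE x y → AlgLE y x → x = y := by
    rintro x y ⟨a, ha⟩ ⟨b, hb⟩
    obtain ⟨n, hn⟩ := hIdx x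
    have hc : x + (a + b) = x := by rw [← add_assoc, ha, hb]
    have hfix : ∀ k : ℕ, x + k • (a + b) = x := by
      intro k
      induction k with
      | zero => simp
      | succ k ih => rw [succ_nsmul, ← add_assoc, ih, hc]
    have hab : a + b = 0 := hn (a + b) ⟨x, by rw [add_comm, hfix (n + 1)]⟩
    have := hCon a b hab
    rw [← ha, this.1, add_zero]
  have exAtom : ∀ a : M, a ≠ 0 → ∃ p : M, MonAtom p ∧ AlgLE p a := by
    intro a ha
    by_contra hno
    push_neg at hno
    have step : ∀ z : M, z ≠ 0 → AlgLE z a → ∃ w : M, w ≠ 0 ∧ AlgLE (2 • w) z := by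
      intro z hz hza
      have hnotatom : ¬ MonAtom z := fun h => hno z h hza
      rw [MonAtom] at hnotatom
      push_neg at hnotatom
      obtain ⟨x, hx, hxz, hzx⟩ := hnotatom hz
      obtain ⟨y, hy⟩ := hxz
      have hy0 : y ≠ 0 := by
        rintro rfl
        rw [add_zero] at hy
        exact hzx (hy ▸ ⟨0, add_zero x⟩)
      obtain ⟨w, hw, ⟨c, hcx⟩, ⟨d, hdy⟩⟩ := hPrime x y hx hy0
      refine ⟨w, hw, ⟨c + d, ?_⟩⟩
      rw [two_nsmul, add_add_add_comm, hcx, hdy, hy]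
    have chain : ∀ k : ℕ, ∃ z : M, z ≠ 0 ∧ AlgLE ((2 ^ k) • z) a := by
      intro k
      induction k with
      | zero => exact ⟨a, ha, ⟨0, by simp⟩⟩
      | succ k ih =>
        obtain ⟨z, hz, hle⟩ := ih
        have h1 : (1 : ℕ) ≤ 2 ^ k := Nat.one_le_two_pow
        have hz_le : AlgLE z ((2 ^ k) • z) :=
          ⟨(2 ^ k - 1) • z, by
            rw [show z + (2 ^ k - 1) • z = (1 + (2 ^ k - 1)) • z by
                  rw [add_nsmul, one_nsmul],
                Nat.add_sub_cancel' h1]⟩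
        obtain ⟨w, hw, hwz⟩ := step z hz (alg_trans hz_le hle)
        refine ⟨w, hw, ?_⟩
        have h2 : AlgLE ((2 ^ k) • (2 • w)) ((2 ^ k) • z) := alg_smul _ hwz
        rw [← mul_nsmul', ← pow_succ] at h2
        exact alg_trans h2 hle
    obtain ⟨n, hn⟩ := hIdx a
    obtain ⟨z, hz, hle⟩ := chain n
    have hnn : n + 1 ≤ 2 ^ n := Nat.lt_two_pow_self
    have h1 : AlgLE ((n + 1) • z) ((2 ^ n) • z) :=
      ⟨(2 ^ n - (n + 1)) • z, by rw [← add_nsmul, Nat.add_sub_cancel' hnn]⟩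
    exact hz (hn z (alg_trans h1 hle))
  refine ⟨exAtom, ?_⟩
  obtain ⟨x0, hx0⟩ := hnz
  obtain ⟨p, hp, _⟩ := exAtom x0 hx0
  refine ⟨p, hp, fun q hq => ?_⟩
  obtain ⟨z, hz, hzq, hzp⟩ := hPrime q p hq.1 hp.1
  have hq_eq : q = z := antis q z (hq.2 z hz hzq) hzq
  have hp_eq : p = z := antis p z (hp.2 z hz hzp) hzp
  rw [hq_eq, hp_eq]
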